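/- Let H be a complex Hilbert space, let U be a bounded linear operator on H that is an isometry (U*U = I), let A be a bounded linear operator on H, and let c be a complex scalar with |c| < 1. If U A = c · A U, then A = 0. -/

import Mathlib

open ContinuousLinearMap

/-- If `U` is an isometry (`U*U = I`) on a complex Hilbert space, `A` is a bounded operator,
`c` is a complex scalar with `|c| < 1`, and `U A = c ⬝ A U`, then `A = 0`. -/
theorem eq_zero_of_isometry_qcommute
    {H : Type*} [NormedAddCommGroup H] [InnerProductSpace ℂ H] [CompleteSpace H]
    (U A : H →L[ℂ] H) (hU : adjoint U * U = 1)
    (c : ℂ) (hc : ‖c‖ < 1) (h : U * A = c • (A * U)) :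
    A = 0 := by
  have hiso : ∀ x : H, ‖U x‖ = ‖x‖ := by
    intro x
    have h1 : (inner ℂ (U x) (U x) : ℂ) = inner ℂ x x := by
      rw [← ContinuousLinearMap.adjoint_inner_left]
      have : (adjoint U * U) x = x := by rw [hU]; rfl
      rw [show (adjoint U) (U x) = x from this]
    have h2 := congrArg (RCLike.re (K := ℂ)) h1
    rw [inner_self_eq_norm_sq (𝕜 := ℂ), inner_self_eq_norm_sq (𝕜 := ℂ)] at h2
    nlinarith [norm_nonneg (U x), norm_nonneg x]
  have key : ∀ x : H, ‖A x‖ ≤ ‖c‖ * ‖A‖ * ‖x‖ := by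
    intro x
    have h1 : ‖A x‖ = ‖U (A x)‖ := (hiso (A x)).symm
    have h2 : U (A x) = c • (A (U x)) := by
      have := congrFun (congrArg DFunLike.coe h) x
      simpa using this
    calc ‖A x‖ = ‖c • A (U x)‖ := by rw [h1, h2]
    _ = ‖c‖ * ‖A (U x)‖ := norm_smul _ _
    _ ≤ ‖c‖ * (‖A‖ * ‖U x‖) := by
        exact mul_le_mul_of_nonneg_left (A.le_opNorm _) (norm_nonneg c)
    _ = ‖c‖ * ‖A‖ * ‖x‖ := by rw [hiso x]; ring
  have hle : ‖A‖ ≤ ‖c‖ * ‖A‖ :=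
    A.opNorm_le_bound (by positivity) key
  have : ‖A‖ = 0 := by nlinarith [norm_nonneg A, norm_nonneg c]
  exact norm_eq_zero.mp this
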